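/- Gate maps are 1-Lipschitz: let C be a dualisable system on a set with walls (S,P), let Ĉ ⊆ X̂ be a nonempty P-convex set with X_C ∩ Ĉ nonempty, and let g denote the gate map to Ĉ. For subsets A,B ⊆ X_C, if a wall h ∈ P separates g(A) from g(B) (every point of g(A) chooses one halfspace of h and every point of g(B) the other), then h separates A from B. In particular, dist_C(g(x),g(y)) ≤ dist_C(x,y) for all x,y ∈ X_C. -/
import Mathlib


open Set

namespace WallDuality

variable {S : Type*}

/-- A wall on `S`, recorded as the unordered pair of its two complementary halfspaces. -/
def IsWall (h : Set (Set S)) : Prop := ∃ A : Set S, h = {A, Aᶜ}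

/-- A set with walls: every element of `P` is a wall on `S`. -/
def IsWallSystem (P : Set (Set (Set S))) : Prop := ∀ h ∈ P, IsWall h

variable (P : Set (Set (Set S)))

/-- An ultrafilter on `P`: a consistent choice of a halfspace of each wall of `P`. -/
def IsUltra (x : ↥P → Set S) : Prop :=
  (∀ w : ↥P, x w ∈ w.1) ∧
    ∀ (w₁ w₂ : ↥P) (A B : Set S), A ∈ w₁.1 → B ∈ w₂.1 → A ⊆ B → x w₁ = A → x w₂ = B

/-- The set `X̂` of all ultrafilters on `P`. -/
def hatX : Set (↥P → Set S) := {x | IsUltra P x}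

/-- The principal ultrafilter of a point `s`: each wall is oriented towards `s`. -/
def principalUF (s : S) : ↥P → Set S := fun w => ⋃₀ {A | A ∈ w.1 ∧ s ∈ A}

/-- The pseudodistance associated with a collection `C` of subsets of `P`:
the supremum of the cardinalities of members of `C` all of whose walls separate
the two orientations. -/
noncomputable def wallDist (C : Set (Set ↥P)) (x y : ↥P → Set S) : ℕ∞ :=
  ⨆ c ∈ {c | c ∈ C ∧ ∀ w ∈ c, x w ≠ y w}, c.encard

/-- A dualisable system on `(S, P)`. -/
structure IsDualisable (C : Set (Set ↥P)) : Prop where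
  singleton_mem : ∀ w : ↥P, ({w} : Set ↥P) ∈ C
  subset_mem : ∀ c ∈ C, ∀ c' ⊆ c, c' ∈ C
  bounded : ∀ s t : S, ∃ M : ℕ, ∀ c ∈ C,
    (∀ w ∈ c, principalUF P s w ≠ principalUF P t w) → c.encard ≤ (M : ℕ∞)

/-- The dual space `X_C`: ultrafilters at finite distance from all principal ones. -/
def dualSpace (C : Set (Set ↥P)) : Set (↥P → Set S) :=
  {x | IsUltra P x ∧ ∀ s : S, wallDist P C x (principalUF P s) ≠ ⊤}

/-- The majority-vote median of three orientations. -/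
def medianUF (x y z : ↥P → Set S) : ↥P → Set S :=
  fun w => x w ∩ y w ∪ x w ∩ z w ∪ y w ∩ z w

/-- A `P`-convex subset of `X̂`: an intersection of halfspaces. -/
def IsPConvex (C' : Set (↥P → Set S)) : Prop :=
  ∃ (Q : Set ↥P) (σ : ↥P → Set S), (∀ w ∈ Q, σ w ∈ w.1) ∧
    C' = {v | IsUltra P v ∧ ∀ w ∈ Q, v w = σ w}

open scoped Classical in
/-- The gate of `z` to a set `C'` of orientations: reverse the orientation of exactly
those walls that separate `z` from `C'`. -/
noncomputable def gateUF (C' : Set (↥P → Set S)) (z : ↥P → Set S) : ↥P → Set S :=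
  fun w => if ∃ v ∈ C', v w = z w then z w else (z w)ᶜ

/-- `A` is gated in `Y` (with respect to the majority-vote median). -/
def IsGatedIn (Y A : Set (↥P → Set S)) : Prop :=
  ∀ x ∈ Y, ∃! g, g ∈ A ∧ ∀ a ∈ A, medianUF P a g x = g

/-- `σ` is a nested choice of halfspaces witnessing that `c` is a chain. -/
def IsChainOrder (σ : ↥P → Set S) (c : Set ↥P) : Prop :=
  (∀ w ∈ c, σ w ∈ w.1) ∧ ∀ w₁ ∈ c, ∀ w₂ ∈ c, σ w₁ ⊆ σ w₂ ∨ σ w₂ ⊆ σ w₁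

/-- A chain of walls. -/
def IsWallChain (c : Set ↥P) : Prop := ∃ σ, IsChainOrder P σ c

/-- A system of chains: a dualisable system all of whose members are chains. -/
def IsChainSystem (C : Set (Set ↥P)) : Prop :=
  IsDualisable P C ∧ ∀ c ∈ C, IsWallChain P c

/-- `C` is `m`-gluable: two members of `C`, one entirely preceding the other and with
union a chain, can be glued after removing at most `m` consecutive walls taken from
the last `m` walls of the first and the first `m` walls of the second. -/
def IsGluable (C : Set (Set ↥P)) (m : ℕ) : Prop :=
  ∀ c₁ ∈ C, ∀ c₂ ∈ C, ∀ σ : ↥P → Set S,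
    IsChainOrder P σ (c₁ ∪ c₂) → Disjoint c₁ c₂ →
    (∀ w₁ ∈ c₁, ∀ w₂ ∈ c₂, σ w₁ ⊆ σ w₂) →
    ∃ b ⊆ c₁ ∪ c₂,
      b.encard ≤ (m : ℕ∞) ∧
      (∀ w ∈ b ∩ c₁, {w' | w' ∈ c₁ ∧ σ w ⊂ σ w'}.encard < (m : ℕ∞)) ∧
      (∀ w ∈ b ∩ c₂, {w' | w' ∈ c₂ ∧ σ w' ⊂ σ w}.encard < (m : ℕ∞)) ∧
      (∀ w₁ ∈ b, ∀ w₂ ∈ b, ∀ w ∈ c₁ ∪ c₂, σ w₁ ⊆ σ w → σ w ⊆ σ w₂ → w ∈ b) ∧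
      (c₁ ∪ c₂) \ b ∈ C

/-- The ball of radius `r` about `x` in `X_C`. -/
def ballX (C : Set (Set ↥P)) (x : ↥P → Set S) (r : ℕ∞) : Set (↥P → Set S) :=
  {z | z ∈ dualSpace P C ∧ wallDist P C x z ≤ r}

/-- The normal wall path: the gate of `y` to the ball of radius `r` about `x`. -/
noncomputable def nwp (C : Set (Set ↥P)) (x y : ↥P → Set S) (r : ℕ) : ↥P → Set S :=
  gateUF P (ballX P C x (r : ℕ∞)) y

/-- Two walls cross: all four quarterspaces are nonempty. -/
def Crosses (w₁ w₂ : ↥P) : Prop := ∀ A ∈ w₁.1, ∀ B ∈ w₂.1, (A ∩ B).Nonempty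

/-- `C` is `L`-separated. -/
def IsSeparated (C : Set (Set ↥P)) (L : ℕ) : Prop :=
  ∀ w₁ w₂ : ↥P, w₁ ≠ w₂ → ({w₁, w₂} : Set ↥P) ∈ C →
    ∀ c ∈ C, (∀ w ∈ c, Crosses P w w₁ ∧ Crosses P w w₂) → c.encard ≤ (L : ℕ∞)

end WallDuality

namespace WallDuality

/-- A wall `w` separates `A` from `B`: all points of `A` choose one halfspace of
`w` and all points of `B` the other. -/
def SeparatesSets {S : Type*} (P : Set (Set (Set S))) (w : ↥P)
    (A B : Set (↥P → Set S)) : Prop :=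
  ∃ H ∈ w.1, (∀ a ∈ A, a w = H) ∧ ∀ b ∈ B, b w = Hᶜ

/-- The complement of a halfspace of a wall is again a halfspace of that wall. -/
lemma compl_mem_wall {S : Type*} {P : Set (Set (Set S))} (hP : IsWallSystem P)
    (w : ↥P) {H : Set S} (hH : H ∈ w.1) : Hᶜ ∈ w.1 := by
  obtain ⟨A, hA⟩ := hP w.1 w.2
  rw [hA] at hH ⊢
  rcases hH with h | h
  · rw [h]; exact Or.inr rfl
  · rw [h, compl_compl]; exact Or.inl rfl

/-- If two orientations agree at `w`, so do their gates. -/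
lemma gate_congr {S : Type*} (P : Set (Set (Set S))) (C' : Set (↥P → Set S))
    {x y : ↥P → Set S} (w : ↥P) (h : x w = y w) :
    gateUF P C' x w = gateUF P C' y w := by
  classical
  simp only [gateUF, h]

/-- **Gate maps are 1-Lipschitz** (Lemma 3.12): any wall separating the gate
images of two subsets of `X_C` separates the subsets themselves; in particular
the gate map does not increase `dist_C`. -/
theorem gate_lipschitz
    {S : Type*} (P : Set (Set (Set S))) (C : Set (Set ↥P))
    (hP : IsWallSystem P) (hC : IsDualisable P C)
    (C' : Set (↥P → Set S)) (hconv : IsPConvex P C')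
    (hne : (dualSpace P C ∩ C').Nonempty) :
    (∀ A B : Set (↥P → Set S), A.Nonempty → B.Nonempty →
      A ⊆ dualSpace P C → B ⊆ dualSpace P C → ∀ w : ↥P,
      SeparatesSets P w (gateUF P C' '' A) (gateUF P C' '' B) →
      SeparatesSets P w A B) ∧
    (∀ x ∈ dualSpace P C, ∀ y ∈ dualSpace P C,
      wallDist P C (gateUF P C' x) (gateUF P C' y) ≤ wallDist P C x y) := by
  classical
  constructor
  · rintro A B ⟨a₀, ha₀⟩ ⟨b₀, hb₀⟩ hA hB w ⟨H, hHw, hgA, hgB⟩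
    have gateA : ∀ a ∈ A, gateUF P C' a w = H := fun a ha =>
      hgA _ (mem_image_of_mem _ ha)
    have gateB : ∀ b ∈ B, gateUF P C' b w = Hᶜ := fun b hb =>
      hgB _ (mem_image_of_mem _ hb)
    by_cases hqH : ∃ v ∈ C', v w = H
    · by_cases hqH' : ∃ v ∈ C', v w = Hᶜ
      · -- both halfspaces are met by C' : the gate does not move anything at w
        refine ⟨H, hHw, ?_, ?_⟩
        · intro a ha
          have hg := gateA a ha
          by_cases h : ∃ v ∈ C', v w = a w
          · simpa [gateUF, h] using hg
          · exfalso
            have h1 : (a w)ᶜ = H := by simpa [gateUF, h] using hg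
            have h2 : a w = Hᶜ := by rw [← h1, compl_compl]
            rw [h2] at h
            exact h hqH'
        · intro b hb
          have hg := gateB b hb
          by_cases h : ∃ v ∈ C', v w = b w
          · simpa [gateUF, h] using hg
          · exfalso
            have h1 : (b w)ᶜ = Hᶜ := by simpa [gateUF, h] using hg
            have h2 : b w = H := compl_injective h1
            rw [h2] at h
            exact h hqH
      · -- impossible: the gate of b₀ would lie in H
        exfalso
        have hg := gateB b₀ hb₀
        by_cases h : ∃ v ∈ C', v w = b₀ w
        · have h2 : b₀ w = Hᶜ := by simpa [gateUF, h] using hg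
          rw [h2] at h
          exact hqH' h
        · have h1 : (b₀ w)ᶜ = Hᶜ := by simpa [gateUF, h] using hg
          have h2 : b₀ w = H := compl_injective h1
          rw [h2] at h
          exact h hqH
    · by_cases hqH' : ∃ v ∈ C', v w = Hᶜ
      · -- impossible: the gate of a₀ would lie in Hᶜ
        exfalso
        have hg := gateA a₀ ha₀
        by_cases h : ∃ v ∈ C', v w = a₀ w
        · have h2 : a₀ w = H := by simpa [gateUF, h] using hg
          rw [h2] at h
          exact hqH h
        · have h1 : (a₀ w)ᶜ = H := by simpa [gateUF, h] using hg
          have h2 : a₀ w = Hᶜ := by rw [← h1, compl_compl]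
          rw [h2] at h
          exact h hqH'
      · -- C' meets neither halfspace (at w) :
        -- the gate flips everything, so A lies in Hᶜ and B in H
        refine ⟨Hᶜ, compl_mem_wall hP w hHw, ?_, ?_⟩
        · intro a ha
          have hg := gateA a ha
          by_cases h : ∃ v ∈ C', v w = a w
          · exfalso
            have h2 : a w = H := by simpa [gateUF, h] using hg
            rw [h2] at h
            exact hqH h
          · have h1 : (a w)ᶜ = H := by simpa [gateUF, h] using hg
            rw [← h1, compl_compl]
        · intro b hb
          have hg := gateB b hb
          by_cases h : ∃ v ∈ C', v w = b w
          · exfalso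
            have h2 : b w = Hᶜ := by simpa [gateUF, h] using hg
            rw [h2] at h
            exact hqH' h
          · have h1 : (b w)ᶜ = Hᶜ := by simpa [gateUF, h] using hg
            rw [compl_compl, compl_injective h1]
  · intro x _ y _
    refine iSup_le fun c => iSup_le fun hc => ?_
    have hc' : c ∈ {c | c ∈ C ∧ ∀ w ∈ c, x w ≠ y w} := by
      refine ⟨hc.1, fun w hw hxy => hc.2 w hw ?_⟩
      exact gate_congr P C' w hxy
    exact le_biSup _ hc'

end WallDuality
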